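/- Let G = (V,E) be a locally finite, connected, vertex-transitive graph, let o, x be vertices, and let n ≥ 1. Then the number of closed walks of length n based at o that visit x equals the number of closed walks of length n based at x that visit o. Equivalently, if 𝓛_n(v) denotes the set of closed walks of length n based at v and P_{n,v} the uniform distribution on 𝓛_n(v), then P_{n,o}[x ∈ w] = P_{n,x}[o ∈ w]. -/

import Mathlib

open SimpleGraph

attribute [local instance] Classical.propDecidable

namespace Stmt11Aux

open SimpleGraph.Walk Finset

variable {V : Type*} [DecidableEq V] {G : SimpleGraph V}

lemma takeUntil_start {t v : V} (q : G.Walk t v) (h : t ∈ q.support) :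
    q.takeUntil t h = Walk.nil := by
  cases q <;> simp [Walk.takeUntil]

lemma dropUntil_start {t v : V} (q : G.Walk t v) (h : t ∈ q.support) :
    q.dropUntil t h = q := by
  cases q <;> simp [Walk.dropUntil]

lemma takeUntil_append_eq {u t v : V} (p : G.Walk u t) (q : G.Walk t v) :
    p.support.count t = 1 → ∀ (h : t ∈ (p.append q).support),
      (p.append q).takeUntil t h = p ∧ (p.append q).dropUntil t h = q := by
  induction p with
  | nil => exact fun hp h => ⟨takeUntil_start q h, dropUntil_start q h⟩
  | @cons u b t r p ih =>
    intro hp h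
    have hu : u ≠ t := by
      intro huv
      subst huv
      have h1 : 1 ≤ p.support.count u := List.count_pos_iff.2 p.end_mem_support
      simp [List.count_cons] at hp
      omega
    have hp' : p.support.count t = 1 := by
      simpa [List.count_cons, hu.symm, hu] using hp
    have h' : t ∈ (p.append q).support := by
      have hh := h
      simp only [Walk.cons_append, Walk.support_cons, List.mem_cons] at hh
      exact hh.resolve_left (fun he => hu he.symm)
    obtain ⟨ih1, ih2⟩ := ih q hp' h'
    constructor
    · simp only [Walk.cons_append, Walk.takeUntil, dif_neg hu]
      rw [ih1]
    · simp only [Walk.cons_append, Walk.dropUntil, dif_neg hu]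
      rw [ih2]

variable (G) [G.LocallyFinite]

/-- Number of walks of length `a` from `u` to `v`. -/
noncomputable def N (a : ℕ) (u v : V) : ℕ := (G.finsetWalkLength a u v).card

/-- Number of first-passage walks of length `a` from `u` to `t` (hitting `t` only at the end). -/
noncomputable def FP (a : ℕ) (u t : V) : ℕ :=
  ((G.finsetWalkLength a u t).filter (fun w => w.support.count t = 1)).card

lemma card_filter_visits (a : ℕ) (u v t : V) :
    ((G.finsetWalkLength a u v).filter (fun w => t ∈ w.support)).card
      = ∑ k ∈ Finset.range (a + 1), FP G k u t * N G (a - k) t v := by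
  have : ∀ k, FP G k u t * N G (a - k) t v
      = (((G.finsetWalkLength k u t).filter (fun w => w.support.count t = 1)) ×ˢ
          (G.finsetWalkLength (a - k) t v)).card := by
    intro k; rw [Finset.card_product]; rfl
  simp only [this, ← Finset.card_sigma]
  refine Finset.card_bij'
    (i := fun w hw => ⟨(w.takeUntil t (by
        simp only [Finset.mem_filter] at hw; exact hw.2)).length,
      (w.takeUntil t (by simp only [Finset.mem_filter] at hw; exact hw.2),
       w.dropUntil t (by simp only [Finset.mem_filter] at hw; exact hw.2))⟩)
    (j := fun z hz => z.2.1.append z.2.2) ?_ ?_ ?_ ?_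
  · intro w hw
    simp only [Finset.mem_filter, mem_finsetWalkLength_iff] at hw
    obtain ⟨hlen, ht⟩ := hw
    have hsplit : (w.takeUntil t ht).length + (w.dropUntil t ht).length = a := by
      rw [← Walk.length_append, Walk.take_spec]; exact hlen
    have hle : (w.takeUntil t ht).length ≤ a := by omega
    simp only [Finset.mem_sigma, Finset.mem_range, Finset.mem_product, Finset.mem_filter,
      mem_finsetWalkLength_iff]
    exact ⟨by omega, ⟨trivial, w.count_support_takeUntil_eq_one ht⟩, by omega⟩
  · rintro ⟨k, p, q⟩ hz
    simp only [Finset.mem_sigma, Finset.mem_range, Finset.mem_product, Finset.mem_filter,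
      mem_finsetWalkLength_iff] at hz
    obtain ⟨hk, ⟨hp, -⟩, hq⟩ := hz
    simp only [Finset.mem_filter, mem_finsetWalkLength_iff, Walk.length_append]
    constructor
    · omega
    · simp [Walk.mem_support_append_iff]
  · intro w hw
    exact Walk.take_spec w _
  · rintro ⟨k, p, q⟩ hz
    simp only [Finset.mem_sigma, Finset.mem_range, Finset.mem_product, Finset.mem_filter,
      mem_finsetWalkLength_iff] at hz
    obtain ⟨hk, ⟨hp, hcount⟩, hq⟩ := hz
    have hmem : t ∈ (p.append q).support := by
      simp [Walk.mem_support_append_iff]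
    obtain ⟨h1, h2⟩ := takeUntil_append_eq p q hcount hmem
    subst hp
    have aux : ∀ (p' : G.Walk u t) (q' : G.Walk t v), p' = p → q' = q →
        (⟨p'.length, (p', q')⟩ : (k : ℕ) × (G.Walk u t × G.Walk t v))
          = ⟨p.length, (p, q)⟩ := by
      rintro p' q' rfl rfl; rfl
    exact aux _ _ h1 h2

lemma N_eq_sum (a : ℕ) (u t : V) :
    N G a u t = ∑ k ∈ Finset.range (a + 1), FP G k u t * N G (a - k) t t := by
  rw [← card_filter_visits]
  unfold N
  congr 1
  exact (Finset.filter_eq_self.2 fun w _ => w.end_mem_support).symm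

lemma N_symm (a : ℕ) (u v : V) : N G a u v = N G a v u := by
  refine Finset.card_nbij' (fun w => w.reverse) (fun w => w.reverse) ?_ ?_ ?_ ?_ <;>
    simp [Set.MapsTo, Set.LeftInvOn, Finset.mem_coe, mem_finsetWalkLength_iff]

lemma N_le_map (φ : G ≃g G) (a : ℕ) (u v : V) : N G a u v ≤ N G a (φ u) (φ v) := by
  refine Finset.card_le_card_of_injOn (fun w => w.map φ.toHom) ?_ ?_
  · intro w hw
    simp only [Finset.mem_coe, mem_finsetWalkLength_iff, Walk.length_map] at *
    exact hw
  · exact (Walk.map_injective_of_injective φ.injective u v).injOn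

lemma N_map (φ : G ≃g G) (a : ℕ) (u v : V) : N G a (φ u) (φ v) = N G a u v := by
  refine le_antisymm ?_ (N_le_map G φ a u v)
  have := N_le_map G φ.symm a (φ u) (φ v)
  simpa using this

lemma N_zero_self (u : V) : N G 0 u u = 1 := by
  simp [N, finsetWalkLength]

end Stmt11Aux

theorem stmt11 {V : Type*} [DecidableEq V] (G : SimpleGraph V) [G.LocallyFinite]
    (hconn : G.Connected) [Infinite V]
    (htrans : ∀ x y : V, ∃ φ : G ≃g G, φ x = y)
    (o x : V) (n : ℕ) (hn : 1 ≤ n) :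
    ((G.finsetWalkLength n o o).filter (fun w => x ∈ w.support)).card =
      ((G.finsetWalkLength n x x).filter (fun w => o ∈ w.support)).card := by
  classical
  open Stmt11Aux in
  obtain ⟨φ, hφ⟩ := htrans o x
  have hC : ∀ m, N G m o o = N G m x x := fun m => by
    rw [← hφ]; exact (N_map G φ m o o).symm
  have hRev : ∀ m, N G m o x = N G m x o := fun m => N_symm G m o x
  have key : ∀ a, FP G a o x = FP G a x o := by
    intro a
    induction a using Nat.strong_induction_on with
    | _ a ih =>
      have h1 := N_eq_sum G a o x
      have h2 := N_eq_sum G a x o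
      rw [hRev a] at h1
      have h3 : ∑ k ∈ Finset.range (a + 1), FP G k o x * N G (a - k) x x
          = ∑ k ∈ Finset.range (a + 1), FP G k x o * N G (a - k) x x := by
        rw [← h1, h2]
        exact Finset.sum_congr rfl fun k _ => by rw [hC (a - k)]
      rw [Finset.sum_range_succ, Finset.sum_range_succ] at h3
      have h4 : ∑ k ∈ Finset.range a, FP G k o x * N G (a - k) x x
          = ∑ k ∈ Finset.range a, FP G k x o * N G (a - k) x x :=
        Finset.sum_congr rfl fun k hk => by
          rw [ih k (Finset.mem_range.mp hk)]
      rw [h4] at h3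
      have h5 : FP G a o x * N G (a - a) x x = FP G a x o * N G (a - a) x x := by omega
      simpa [Nat.sub_self, N_zero_self] using h5
  rw [card_filter_visits G n o o x, card_filter_visits G n x x o]
  refine Finset.sum_congr rfl fun k hk => ?_
  rw [key k, hRev (n - k)]
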